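/- Let G be a finite simple graph, let W be a non-empty module of G, and let a ∈ W. Then a is adjacent to every other vertex of W if and only if a belongs to every max clique C of G with C ∩ W ≠ ∅. -/

import Mathlib

/-- A max clique: an inclusion-maximal clique. -/
def IsMaxClique {V : Type} (G : SimpleGraph V) (s : Set V) : Prop :=
  G.IsClique s ∧ ∀ t : Set V, G.IsClique t → s ⊆ t → t = s

/-- A module of `G`: a set `W` of vertices such that every vertex outside `W` is
adjacent either to all vertices of `W` or to none of them. -/
def IsModule {V : Type} (G : SimpleGraph V) (W : Set V) : Prop :=
  ∀ v : V, v ∉ W → (∀ w ∈ W, G.Adj v w) ∨ (∀ w ∈ W, ¬ G.Adj v w)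

/-- Let `W` be a non-empty module of the finite simple graph `G` and
`a ∈ W`.  Then `a` is adjacent to every other vertex of `W` iff `a` belongs to every
max clique `C` of `G` with `C ∩ W ≠ ∅`. -/
theorem module_apex_iff_in_all_maxCliques {V : Type} [Fintype V] (G : SimpleGraph V)
    (W : Set V) (hW : IsModule G W) (hne : W.Nonempty) (a : V) (ha : a ∈ W) :
    (∀ b ∈ W, b ≠ a → G.Adj a b) ↔
      (∀ C : Set V, IsMaxClique G C → (C ∩ W).Nonempty → a ∈ C) := by
  constructor
  · intro h C hC hCW
    obtain ⟨c, hcC, hcW⟩ := hCW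
    have hadj : ∀ v ∈ C, a ≠ v → G.Adj a v := by
      intro v hv hva2
      have hva := hva2.symm
      by_cases hvW : v ∈ W
      · exact h v hvW hva
      · have hvc : v ≠ c := fun hh => hvW (hh ▸ hcW)
        have hvadjc : G.Adj v c := hC.1 hv hcC hvc
        rcases hW v hvW with h1 | h2
        · exact (h1 a ha).symm
        · exact absurd hvadjc (h2 c hcW)
    have hclique : G.IsClique (insert a C) := hC.1.insert hadj
    have := hC.2 (insert a C) hclique (Set.subset_insert a C)
    rw [← this]
    exact Set.mem_insert a C
  · intro h b hb hba
    obtain ⟨t, ht, hmax⟩ := Set.Finite.exists_maximalFor id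
      {t : Set V | G.IsClique t ∧ b ∈ t} (Set.toFinite _)
      ⟨{b}, by simp [SimpleGraph.isClique_singleton], by simp⟩
    have hmc : IsMaxClique G t :=
      ⟨ht.1, fun u hu hsub => Set.Subset.antisymm (hmax (j := u) ⟨hu, hsub ht.2⟩ hsub) hsub⟩
    have haT : a ∈ t := h t hmc ⟨b, ht.2, hb⟩
    exact ht.1 haT ht.2 hba.symm
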